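/- Let r ≥ 3 and let H be a linear r-uniform hypergraph containing no copy of B_4^r in which every vertex has degree at least 2. Then every vertex of H has degree at most r+1. -/
import Mathlib


/-- In a linear r-uniform B_4^r-free hypergraph with minimum degree at least 2,
every vertex has degree at most r+1. -/
theorem stmt_7 {V : Type*} [Fintype V] [DecidableEq V]
    (r : ℕ) (hr : 3 ≤ r)
    (E : Finset (Finset V))
    (huniform : ∀ e ∈ E, e.card = r)
    (hlinear : ∀ e ∈ E, ∀ f ∈ E, e ≠ f → (e ∩ f).card ≤ 1)
    (hB4free : ¬ ∃ e₁ ∈ E, ∃ e₂ ∈ E, ∃ e₃ ∈ E, ∃ f ∈ E, ∃ v : V,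
      e₁ ≠ e₂ ∧ e₁ ≠ e₃ ∧ e₁ ≠ f ∧ e₂ ≠ e₃ ∧ e₂ ≠ f ∧ e₃ ≠ f ∧
      v ∈ e₁ ∧ v ∈ e₂ ∧ v ∈ e₃ ∧ v ∉ f ∧
      (f ∩ e₁).Nonempty ∧ f ∩ e₂ = ∅ ∧ f ∩ e₃ = ∅)
    (hmindeg : ∀ v : V, 2 ≤ (E.filter (fun e => v ∈ e)).card) :
    ∀ v : V, (E.filter (fun e => v ∈ e)).card ≤ r + 1 := by
  classical
  intro v
  by_contra hd
  push_neg at hd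
  set S := E.filter (fun e => v ∈ e) with hS
  have hSv : ∀ e ∈ S, v ∈ e ∧ e ∈ E := by
    intro e he
    have := Finset.mem_filter.mp he
    exact ⟨this.2, this.1⟩
  -- pick e₁ through v
  obtain ⟨e₁, he₁S⟩ := Finset.card_pos.mp (show 0 < S.card by omega)
  obtain ⟨hv₁, he₁E⟩ := hSv e₁ he₁S
  have hcard₁ := huniform e₁ he₁E
  -- pick u ∈ e₁, u ≠ v
  have hu : ∃ u ∈ e₁, u ≠ v := by
    by_contra h
    push_neg at h
    have hsub : e₁ ⊆ {v} := fun x hx => Finset.mem_singleton.mpr (h x hx)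
    have := Finset.card_le_card hsub
    simp only [Finset.card_singleton] at this
    omega
  obtain ⟨u, huE₁, huv⟩ := hu
  -- pick f ∋ u, f ≠ e₁
  have h2u : 2 ≤ (E.filter (fun e => u ∈ e)).card := hmindeg u
  obtain ⟨f, hfmem, hfne⟩ :=
    Finset.exists_mem_ne (show 1 < (E.filter (fun e => u ∈ e)).card by omega) e₁
  obtain ⟨hfE, huf⟩ := Finset.mem_filter.mp hfmem
  -- v ∉ f by linearity
  have hvf : v ∉ f := by
    intro hvf
    have h2 : 1 < (e₁ ∩ f).card := Finset.one_lt_card.mpr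
      ⟨u, Finset.mem_inter.mpr ⟨huE₁, huf⟩, v, Finset.mem_inter.mpr ⟨hv₁, hvf⟩, huv⟩
    have := hlinear e₁ he₁E f hfE hfne.symm
    omega
  -- edges through v meeting f
  set g : Finset V → V := fun e => if h : (f ∩ e).Nonempty then h.choose else v with hg
  set T := S.filter (fun e => (f ∩ e).Nonempty) with hT
  have hgmem : ∀ e ∈ T, g e ∈ f ∩ e := by
    intro e he
    have hne := (Finset.mem_filter.mp he).2
    simp only [hg, dif_pos hne]
    exact hne.choose_spec
  have hTcard : T.card ≤ r := by
    have hle : T.card ≤ f.card := by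
      apply Finset.card_le_card_of_injOn g
        (fun e he => (Finset.mem_inter.mp (hgmem e he)).1)
      intro a ha b hb hab
      by_contra hne
      have hga := hgmem a ha
      have hgb := hgmem b hb
      have haS := (Finset.mem_filter.mp ha).1
      have hbS := (Finset.mem_filter.mp hb).1
      have hva : v ∈ a := (hSv a haS).1
      have hvb : v ∈ b := (hSv b hbS).1
      have hgv : g a ≠ v := fun h => hvf (h ▸ (Finset.mem_inter.mp hga).1)
      have hgab : g a ∈ a ∩ b := Finset.mem_inter.mpr
        ⟨(Finset.mem_inter.mp hga).2, hab ▸ (Finset.mem_inter.mp hgb).2⟩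
      have h2 : 1 < (a ∩ b).card := Finset.one_lt_card.mpr
        ⟨g a, hgab, v, Finset.mem_inter.mpr ⟨hva, hvb⟩, hgv⟩
      have := hlinear a (hSv a haS).2 b (hSv b hbS).2 hne
      omega
    rwa [huniform f hfE] at hle
  -- two edges through v disjoint from f
  have hsub : T ⊆ S := Finset.filter_subset _ _
  have hsd : 2 ≤ (S \ T).card := by
    have := Finset.card_sdiff_of_subset hsub
    omega
  obtain ⟨e₂, he₂, e₃, he₃, hne23⟩ := Finset.one_lt_card.mp (show 1 < (S \ T).card by omega)
  have he₂' := Finset.mem_sdiff.mp he₂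
  have he₃' := Finset.mem_sdiff.mp he₃
  obtain ⟨hv₂, he₂E⟩ := hSv e₂ he₂'.1
  obtain ⟨hv₃, he₃E⟩ := hSv e₃ he₃'.1
  have hfe₂ : f ∩ e₂ = ∅ := by
    by_contra h
    exact he₂'.2 (Finset.mem_filter.mpr ⟨he₂'.1, Finset.nonempty_iff_ne_empty.mpr h⟩)
  have hfe₃ : f ∩ e₃ = ∅ := by
    by_contra h
    exact he₃'.2 (Finset.mem_filter.mpr ⟨he₃'.1, Finset.nonempty_iff_ne_empty.mpr h⟩)
  have hfe₁ : (f ∩ e₁).Nonempty := ⟨u, Finset.mem_inter.mpr ⟨huf, huE₁⟩⟩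
  apply hB4free
  refine ⟨e₁, he₁E, e₂, he₂E, e₃, he₃E, f, hfE, v, ?_, ?_, hfne.symm, hne23, ?_, ?_,
    hv₁, hv₂, hv₃, hvf, hfe₁, hfe₂, hfe₃⟩
  · intro h; rw [h] at hfe₁; rw [hfe₂] at hfe₁; exact Finset.not_nonempty_empty hfe₁
  · intro h; rw [h] at hfe₁; rw [hfe₃] at hfe₁; exact Finset.not_nonempty_empty hfe₁
  · intro h; exact hvf (h ▸ hv₂)
  · intro h; exact hvf (h ▸ hv₃)
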